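/- Let ψ(a,t) = 76 sinh(2a) − 22 sinh(2t) + 29 sinh(4a+2t) + sinh(8a+2t) − 26 sinh(6a+4t) − 6 sinh(10a+4t) − 25 sinh(8a+6t) + sinh(12a+6t). Then ψ(a,t) < 0 for all 0 < a ≤ A₄ and t > 0, where A₄ = (1/4)·arcosh((35+√1241)/8). -/

import Mathlib

open Real

set_option maxHeartbeats 2000000
set_option maxRecDepth 8000

noncomputable def arcosh (x : ℝ) : ℝ := Real.log (x + Real.sqrt (x^2 - 1))

lemma keyQ (p q : ℝ) (hp : 0 < p) (hq : 0 < q) :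
    (-223)*q + (-983/2)*q^2 + (-504)*q^3 + (-281)*q^4 + (-77)*q^5 + (-15/2)*q^6 + (-95)*p + (-1462)*p*q + (-3775)*p*q^2 + (-4428)*p*q^3 + (-2645)*p*q^4 + (-750)*p*q^5 + (-75)*p*q^6 + (-855/2)*p^2 + (-5131)*p^2*q + (-29135/2)*p^2*q^2 + (-18246)*p^2*q^3 + (-22621/2)*p^2*q^4 + (-3291)*p^2*q^5 + (-675/2)*p^2*q^6 + (-1380)*p^3 + (-13120)*p^3*q + (-36552)*p^3*q^2 + (-46064)*p^3*q^3 + (-28926)*p^3*q^4 + (-8574)*p^3*q^5 + (-900)*p^3*q^6 + (-3355)*p^4 + (-24708)*p^4*q + (-63674)*p^4*q^2 + (-78200)*p^4*q^3 + (-49010)*p^4*q^4 + (-14706)*p^4*q^5 + (-1575)*p^4*q^6 + (-5270)*p^5 + (-32692)*p^5*q + (-78042)*p^5*q^2 + (-92696)*p^5*q^3 + (-57574)*p^5*q^4 + (-17388)*p^5*q^5 + (-1890)*p^5*q^6 + (-5257)*p^6 + (-29710)*p^6*q + (-67247)*p^6*q^2 + (-77648)*p^6*q^3 + (-47685)*p^6*q^4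 + (-14406)*p^6*q^5 + (-1575)*p^6*q^6 + (-3408)*p^7 + (-18424)*p^7*q + (-40440)*p^7*q^2 + (-45756)*p^7*q^3 + (-27748)*p^7*q^4 + (-8316)*p^7*q^5 + (-900)*p^7*q^6 + (-1460)*p^8 + (-7739)*p^8*q + (-33387/2)*p^8*q^2 + (-18584)*p^8*q^3 + (-11081)*p^8*q^4 + (-3249)*p^8*q^5 + (-675/2)*p^8*q^6 + (-411)*p^9 + (-2150)*p^9*q + (-4565)*p^9*q^2 + (-4980)*p^9*q^3 + (-2885)*p^9*q^4 + (-806)*p^9*q^5 + (-75)*p^9*q^6 + (-143/2)*p^10 + (-367)*p^10*q + (-1521/2)*p^10*q^2 + (-802)*p^10*q^3 + (-881/2)*p^10*q^4 + (-111)*p^10*q^5 + (-15/2)*p^10*q^6 + (-6)*p^11 + (-30)*p^11*q + (-60)*p^11*q^2 + (-60)*p^11*q^3 + (-30)*p^11*q^4 + (-6)*p^11*q^5 < 0 := by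
  have f0 : (0:ℝ) ≤ q^1 := pow_nonneg hq.le 1
  have f1 : (0:ℝ) ≤ q^2 := pow_nonneg hq.le 2
  have f2 : (0:ℝ) ≤ q^3 := pow_nonneg hq.le 3
  have f3 : (0:ℝ) ≤ q^4 := pow_nonneg hq.le 4
  have f4 : (0:ℝ) ≤ q^5 := pow_nonneg hq.le 5
  have f5 : (0:ℝ) ≤ q^6 := pow_nonneg hq.le 6
  have f6 : (0:ℝ) ≤ p^1 := pow_nonneg hp.le 1
  have f7 : (0:ℝ) ≤ p^1*q^1 := mul_nonneg (pow_nonneg hp.le 1) (pow_nonneg hq.le 1)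
  have f8 : (0:ℝ) ≤ p^1*q^2 := mul_nonneg (pow_nonneg hp.le 1) (pow_nonneg hq.le 2)
  have f9 : (0:ℝ) ≤ p^1*q^3 := mul_nonneg (pow_nonneg hp.le 1) (pow_nonneg hq.le 3)
  have f10 : (0:ℝ) ≤ p^1*q^4 := mul_nonneg (pow_nonneg hp.le 1) (pow_nonneg hq.le 4)
  have f11 : (0:ℝ) ≤ p^1*q^5 := mul_nonneg (pow_nonneg hp.le 1) (pow_nonneg hq.le 5)
  have f12 : (0:ℝ) ≤ p^1*q^6 := mul_nonneg (pow_nonneg hp.le 1) (pow_nonneg hq.le 6)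
  have f13 : (0:ℝ) ≤ p^2 := pow_nonneg hp.le 2
  have f14 : (0:ℝ) ≤ p^2*q^1 := mul_nonneg (pow_nonneg hp.le 2) (pow_nonneg hq.le 1)
  have f15 : (0:ℝ) ≤ p^2*q^2 := mul_nonneg (pow_nonneg hp.le 2) (pow_nonneg hq.le 2)
  have f16 : (0:ℝ) ≤ p^2*q^3 := mul_nonneg (pow_nonneg hp.le 2) (pow_nonneg hq.le 3)
  have f17 : (0:ℝ) ≤ p^2*q^4 := mul_nonneg (pow_nonneg hp.le 2) (pow_nonneg hq.le 4)
  have f18 : (0:ℝ) ≤ p^2*q^5 := mul_nonneg (pow_nonneg hp.le 2) (pow_nonneg hq.le 5)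
  have f19 : (0:ℝ) ≤ p^2*q^6 := mul_nonneg (pow_nonneg hp.le 2) (pow_nonneg hq.le 6)
  have f20 : (0:ℝ) ≤ p^3 := pow_nonneg hp.le 3
  have f21 : (0:ℝ) ≤ p^3*q^1 := mul_nonneg (pow_nonneg hp.le 3) (pow_nonneg hq.le 1)
  have f22 : (0:ℝ) ≤ p^3*q^2 := mul_nonneg (pow_nonneg hp.le 3) (pow_nonneg hq.le 2)
  have f23 : (0:ℝ) ≤ p^3*q^3 := mul_nonneg (pow_nonneg hp.le 3) (pow_nonneg hq.le 3)
  have f24 : (0:ℝ) ≤ p^3*q^4 := mul_nonneg (pow_nonneg hp.le 3) (pow_nonneg hq.le 4)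
  have f25 : (0:ℝ) ≤ p^3*q^5 := mul_nonneg (pow_nonneg hp.le 3) (pow_nonneg hq.le 5)
  have f26 : (0:ℝ) ≤ p^3*q^6 := mul_nonneg (pow_nonneg hp.le 3) (pow_nonneg hq.le 6)
  have f27 : (0:ℝ) ≤ p^4 := pow_nonneg hp.le 4
  have f28 : (0:ℝ) ≤ p^4*q^1 := mul_nonneg (pow_nonneg hp.le 4) (pow_nonneg hq.le 1)
  have f29 : (0:ℝ) ≤ p^4*q^2 := mul_nonneg (pow_nonneg hp.le 4) (pow_nonneg hq.le 2)
  have f30 : (0:ℝ) ≤ p^4*q^3 := mul_nonneg (pow_nonneg hp.le 4) (pow_nonneg hq.le 3)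
  have f31 : (0:ℝ) ≤ p^4*q^4 := mul_nonneg (pow_nonneg hp.le 4) (pow_nonneg hq.le 4)
  have f32 : (0:ℝ) ≤ p^4*q^5 := mul_nonneg (pow_nonneg hp.le 4) (pow_nonneg hq.le 5)
  have f33 : (0:ℝ) ≤ p^4*q^6 := mul_nonneg (pow_nonneg hp.le 4) (pow_nonneg hq.le 6)
  have f34 : (0:ℝ) ≤ p^5 := pow_nonneg hp.le 5
  have f35 : (0:ℝ) ≤ p^5*q^1 := mul_nonneg (pow_nonneg hp.le 5) (pow_nonneg hq.le 1)
  have f36 : (0:ℝ) ≤ p^5*q^2 := mul_nonneg (pow_nonneg hp.le 5) (pow_nonneg hq.le 2)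
  have f37 : (0:ℝ) ≤ p^5*q^3 := mul_nonneg (pow_nonneg hp.le 5) (pow_nonneg hq.le 3)
  have f38 : (0:ℝ) ≤ p^5*q^4 := mul_nonneg (pow_nonneg hp.le 5) (pow_nonneg hq.le 4)
  have f39 : (0:ℝ) ≤ p^5*q^5 := mul_nonneg (pow_nonneg hp.le 5) (pow_nonneg hq.le 5)
  have f40 : (0:ℝ) ≤ p^5*q^6 := mul_nonneg (pow_nonneg hp.le 5) (pow_nonneg hq.le 6)
  have f41 : (0:ℝ) ≤ p^6 := pow_nonneg hp.le 6
  have f42 : (0:ℝ) ≤ p^6*q^1 := mul_nonneg (pow_nonneg hp.le 6) (pow_nonneg hq.le 1)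
  have f43 : (0:ℝ) ≤ p^6*q^2 := mul_nonneg (pow_nonneg hp.le 6) (pow_nonneg hq.le 2)
  have f44 : (0:ℝ) ≤ p^6*q^3 := mul_nonneg (pow_nonneg hp.le 6) (pow_nonneg hq.le 3)
  have f45 : (0:ℝ) ≤ p^6*q^4 := mul_nonneg (pow_nonneg hp.le 6) (pow_nonneg hq.le 4)
  have f46 : (0:ℝ) ≤ p^6*q^5 := mul_nonneg (pow_nonneg hp.le 6) (pow_nonneg hq.le 5)
  have f47 : (0:ℝ) ≤ p^6*q^6 := mul_nonneg (pow_nonneg hp.le 6) (pow_nonneg hq.le 6)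
  have f48 : (0:ℝ) ≤ p^7 := pow_nonneg hp.le 7
  have f49 : (0:ℝ) ≤ p^7*q^1 := mul_nonneg (pow_nonneg hp.le 7) (pow_nonneg hq.le 1)
  have f50 : (0:ℝ) ≤ p^7*q^2 := mul_nonneg (pow_nonneg hp.le 7) (pow_nonneg hq.le 2)
  have f51 : (0:ℝ) ≤ p^7*q^3 := mul_nonneg (pow_nonneg hp.le 7) (pow_nonneg hq.le 3)
  have f52 : (0:ℝ) ≤ p^7*q^4 := mul_nonneg (pow_nonneg hp.le 7) (pow_nonneg hq.le 4)
  have f53 : (0:ℝ) ≤ p^7*q^5 := mul_nonneg (pow_nonneg hp.le 7) (pow_nonneg hq.le 5)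
  have f54 : (0:ℝ) ≤ p^7*q^6 := mul_nonneg (pow_nonneg hp.le 7) (pow_nonneg hq.le 6)
  have f55 : (0:ℝ) ≤ p^8 := pow_nonneg hp.le 8
  have f56 : (0:ℝ) ≤ p^8*q^1 := mul_nonneg (pow_nonneg hp.le 8) (pow_nonneg hq.le 1)
  have f57 : (0:ℝ) ≤ p^8*q^2 := mul_nonneg (pow_nonneg hp.le 8) (pow_nonneg hq.le 2)
  have f58 : (0:ℝ) ≤ p^8*q^3 := mul_nonneg (pow_nonneg hp.le 8) (pow_nonneg hq.le 3)
  have f59 : (0:ℝ) ≤ p^8*q^4 := mul_nonneg (pow_nonneg hp.le 8) (pow_nonneg hq.le 4)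
  have f60 : (0:ℝ) ≤ p^8*q^5 := mul_nonneg (pow_nonneg hp.le 8) (pow_nonneg hq.le 5)
  have f61 : (0:ℝ) ≤ p^8*q^6 := mul_nonneg (pow_nonneg hp.le 8) (pow_nonneg hq.le 6)
  have f62 : (0:ℝ) ≤ p^9 := pow_nonneg hp.le 9
  have f63 : (0:ℝ) ≤ p^9*q^1 := mul_nonneg (pow_nonneg hp.le 9) (pow_nonneg hq.le 1)
  have f64 : (0:ℝ) ≤ p^9*q^2 := mul_nonneg (pow_nonneg hp.le 9) (pow_nonneg hq.le 2)
  have f65 : (0:ℝ) ≤ p^9*q^3 := mul_nonneg (pow_nonneg hp.le 9) (pow_nonneg hq.le 3)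
  have f66 : (0:ℝ) ≤ p^9*q^4 := mul_nonneg (pow_nonneg hp.le 9) (pow_nonneg hq.le 4)
  have f67 : (0:ℝ) ≤ p^9*q^5 := mul_nonneg (pow_nonneg hp.le 9) (pow_nonneg hq.le 5)
  have f68 : (0:ℝ) ≤ p^9*q^6 := mul_nonneg (pow_nonneg hp.le 9) (pow_nonneg hq.le 6)
  have f69 : (0:ℝ) ≤ p^10 := pow_nonneg hp.le 10
  have f70 : (0:ℝ) ≤ p^10*q^1 := mul_nonneg (pow_nonneg hp.le 10) (pow_nonneg hq.le 1)
  have f71 : (0:ℝ) ≤ p^10*q^2 := mul_nonneg (pow_nonneg hp.le 10) (pow_nonneg hq.le 2)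
  have f72 : (0:ℝ) ≤ p^10*q^3 := mul_nonneg (pow_nonneg hp.le 10) (pow_nonneg hq.le 3)
  have f73 : (0:ℝ) ≤ p^10*q^4 := mul_nonneg (pow_nonneg hp.le 10) (pow_nonneg hq.le 4)
  have f74 : (0:ℝ) ≤ p^10*q^5 := mul_nonneg (pow_nonneg hp.le 10) (pow_nonneg hq.le 5)
  have f75 : (0:ℝ) ≤ p^10*q^6 := mul_nonneg (pow_nonneg hp.le 10) (pow_nonneg hq.le 6)
  have f76 : (0:ℝ) ≤ p^11 := pow_nonneg hp.le 11
  have f77 : (0:ℝ) ≤ p^11*q^1 := mul_nonneg (pow_nonneg hp.le 11) (pow_nonneg hq.le 1)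
  have f78 : (0:ℝ) ≤ p^11*q^2 := mul_nonneg (pow_nonneg hp.le 11) (pow_nonneg hq.le 2)
  have f79 : (0:ℝ) ≤ p^11*q^3 := mul_nonneg (pow_nonneg hp.le 11) (pow_nonneg hq.le 3)
  have f80 : (0:ℝ) ≤ p^11*q^4 := mul_nonneg (pow_nonneg hp.le 11) (pow_nonneg hq.le 4)
  have f81 : (0:ℝ) ≤ p^11*q^5 := mul_nonneg (pow_nonneg hp.le 11) (pow_nonneg hq.le 5)
  linarith [hp, hq, f0, f1, f2, f3, f4, f5, f6, f7, f8, f9, f10, f11, f12, f13, f14, f15, f16, f17, f18, f19, f20, f21, f22, f23, f24, f25, f26, f27, f28, f29, f30, f31, f32, f33, f34, f35, f36, f37, f38, f39, f40, f41, f42, f43, f44, f45, f46, f47, f48, f49, f50, f51, f52, f53, f54, f55, f56, f57, f58, f59, f60, f61, f62, f63, f64, f65, f66, f67, f68, f69, f70, f71, f72, f73, f74, f75, f76, f77, f78, f79, f80, f81]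

lemma keyP (x y : ℝ) (hx : 1 < x) (hy : 1 < y) (hc : x^2 ≤ 35/2) :
    x^12*y^6 - 25*x^10*y^6 - 6*x^11*y^5 - 26*x^9*y^5 + x^10*y^4 + 29*x^8*y^4 - 22*x^6*y^4 + 76*x^7*y^3 - 76*x^5*y^3 + 22*x^6*y^2 - 29*x^4*y^2 - x^2*y^2 + 26*x^3*y + 6*x*y + 25*x^2 - 1 < 0 := by
  have hp : 0 < x - 1 := by linarith
  have hq : 0 < y - 1 := by linarith
  have hx0 : (0:ℝ) < x := by linarith
  have hy0 : (0:ℝ) < y := by linarith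
  have hM : 0 ≤ (35/2 - x^2) * (x^10*y^6 - x^8*y^4) := by
    apply mul_nonneg (by linarith)
    have hx2 : (1:ℝ) ≤ x^2 := by nlinarith
    have hy2 : (1:ℝ) ≤ y^2 := by nlinarith
    have h1 : (1:ℝ) ≤ x^2*y^2 := by nlinarith
    have h2 : (0:ℝ) ≤ x^8*y^4 := by positivity
    nlinarith [mul_nonneg h2 (by linarith : (0:ℝ) ≤ x^2*y^2 - 1)]
  have hQ := keyQ (x-1) (y-1) hp hq
  have hid : (x^12*y^6 - 25*x^10*y^6 - 6*x^11*y^5 - 26*x^9*y^5 + x^10*y^4 + 29*x^8*y^4 - 22*x^6*y^4 + 76*x^7*y^3 - 76*x^5*y^3 + 22*x^6*y^2 - 29*x^4*y^2 - x^2*y^2 + 26*x^3*y + 6*x*y + 25*x^2 - 1) + (35/2 - x^2) * (x^10*y^6 - x^8*y^4) =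
      (-223)*(y-1) + (-983/2)*(y-1)^2 + (-504)*(y-1)^3 + (-281)*(y-1)^4 + (-77)*(y-1)^5 + (-15/2)*(y-1)^6 + (-95)*(x-1) + (-1462)*(x-1)*(y-1) + (-3775)*(x-1)*(y-1)^2 + (-4428)*(x-1)*(y-1)^3 + (-2645)*(x-1)*(y-1)^4 + (-750)*(x-1)*(y-1)^5 + (-75)*(x-1)*(y-1)^6 + (-855/2)*(x-1)^2 + (-5131)*(x-1)^2*(y-1) + (-29135/2)*(x-1)^2*(y-1)^2 + (-18246)*(x-1)^2*(y-1)^3 + (-22621/2)*(x-1)^2*(y-1)^4 + (-3291)*(x-1)^2*(y-1)^5 + (-675/2)*(x-1)^2*(y-1)^6 + (-1380)*(x-1)^3 + (-13120)*(x-1)^3*(y-1) + (-36552)*(x-1)^3*(y-1)^2 + (-46064)*(x-1)^3*(y-1)^3 + (-28926)*(x-1)^3*(y-1)^4 + (-8574)*(x-1)^3*(y-1)^5 + (-900)*(x-1)^3*(y-1)^6 + (-3355)*(x-1)^4 + (-24708)*(x-1)^4*(y-1) + (-63674)*(x-1)^4*(y-1)^2 + (-78200)*(x-1)^4*(y-1)^3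 + (-49010)*(x-1)^4*(y-1)^4 + (-14706)*(x-1)^4*(y-1)^5 + (-1575)*(x-1)^4*(y-1)^6 + (-5270)*(x-1)^5 + (-32692)*(x-1)^5*(y-1) + (-78042)*(x-1)^5*(y-1)^2 + (-92696)*(x-1)^5*(y-1)^3 + (-57574)*(x-1)^5*(y-1)^4 + (-17388)*(x-1)^5*(y-1)^5 + (-1890)*(x-1)^5*(y-1)^6 + (-5257)*(x-1)^6 + (-29710)*(x-1)^6*(y-1) + (-67247)*(x-1)^6*(y-1)^2 + (-77648)*(x-1)^6*(y-1)^3 + (-47685)*(x-1)^6*(y-1)^4 + (-14406)*(x-1)^6*(y-1)^5 + (-1575)*(x-1)^6*(y-1)^6 + (-3408)*(x-1)^7 + (-18424)*(x-1)^7*(y-1) + (-40440)*(x-1)^7*(y-1)^2 + (-45756)*(x-1)^7*(y-1)^3 + (-27748)*(x-1)^7*(y-1)^4 + (-8316)*(x-1)^7*(y-1)^5 + (-900)*(x-1)^7*(y-1)^6 + (-1460)*(x-1)^8 + (-7739)*(x-1)^8*(y-1) + (-33387/2)*(x-1)^8*(y-1)^2 + (-18584)*(x-1)^8*(y-1)^3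 + (-11081)*(x-1)^8*(y-1)^4 + (-3249)*(x-1)^8*(y-1)^5 + (-675/2)*(x-1)^8*(y-1)^6 + (-411)*(x-1)^9 + (-2150)*(x-1)^9*(y-1) + (-4565)*(x-1)^9*(y-1)^2 + (-4980)*(x-1)^9*(y-1)^3 + (-2885)*(x-1)^9*(y-1)^4 + (-806)*(x-1)^9*(y-1)^5 + (-75)*(x-1)^9*(y-1)^6 + (-143/2)*(x-1)^10 + (-367)*(x-1)^10*(y-1) + (-1521/2)*(x-1)^10*(y-1)^2 + (-802)*(x-1)^10*(y-1)^3 + (-881/2)*(x-1)^10*(y-1)^4 + (-111)*(x-1)^10*(y-1)^5 + (-15/2)*(x-1)^10*(y-1)^6 + (-6)*(x-1)^11 + (-30)*(x-1)^11*(y-1) + (-60)*(x-1)^11*(y-1)^2 + (-60)*(x-1)^11*(y-1)^3 + (-30)*(x-1)^11*(y-1)^4 + (-6)*(x-1)^11*(y-1)^5 := by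
    ring
  linarith [hid]

theorem psi_neg (a t : ℝ) (ha : 0 < a)
    (ha' : a ≤ (1/4) * _root_.arcosh ((35 + Real.sqrt 1241) / 8)) (ht : 0 < t) :
    76 * Real.sinh (2*a) - 22 * Real.sinh (2*t) + 29 * Real.sinh (4*a+2*t)
      + Real.sinh (8*a+2*t) - 26 * Real.sinh (6*a+4*t) - 6 * Real.sinh (10*a+4*t)
      - 25 * Real.sinh (8*a+6*t) + Real.sinh (12*a+6*t) < 0 := by
  set x := Real.exp (2*a) with hxdef
  set y := Real.exp (2*t) with hydef
  have hx0 : (0:ℝ) < x := Real.exp_pos _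
  have hy0 : (0:ℝ) < y := Real.exp_pos _
  have hx : 1 < x := by
    rw [hxdef, show (1:ℝ) = Real.exp 0 from Real.exp_zero.symm]
    exact Real.exp_lt_exp.mpr (by linarith)
  have hy : 1 < y := by
    rw [hydef, show (1:ℝ) = Real.exp 0 from Real.exp_zero.symm]
    exact Real.exp_lt_exp.mpr (by linarith)
  -- bound x^2 ≤ 35/2
  have hs0 : (0:ℝ) ≤ Real.sqrt 1241 := Real.sqrt_nonneg _
  have hs : (Real.sqrt 1241)^2 = 1241 := Real.sq_sqrt (by norm_num)
  set s := Real.sqrt 1241 with hsdef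
  have hsub : (35:ℝ) < s := by nlinarith
  have hsup : s < 2466/70 := by nlinarith
  set h4 : ℝ := (35 + s) / 8 with hh4
  have hh41 : (1:ℝ) < h4 := by rw [hh4]; linarith
  have hr0 : (0:ℝ) ≤ Real.sqrt (h4^2 - 1) := Real.sqrt_nonneg _
  have hr : (Real.sqrt (h4^2 - 1))^2 = h4^2 - 1 := Real.sq_sqrt (by nlinarith)
  set r := Real.sqrt (h4^2 - 1) with hrdef
  have hw0 : (0:ℝ) < h4 + r := by linarith
  have hwlt : h4 + r < 35/2 := by nlinarith
  have hlog : _root_.arcosh ((35 + s) / 8) = Real.log (h4 + r) := by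
    rw [_root_.arcosh, hh4]
  have h4a : 4 * a ≤ Real.log (h4 + r) := by
    rw [← hlog]; linarith
  have hexp : Real.exp (4*a) ≤ h4 + r := by
    calc Real.exp (4*a) ≤ Real.exp (Real.log (h4 + r)) := Real.exp_le_exp.mpr h4a
    _ = h4 + r := Real.exp_log hw0
  have hc : x^2 ≤ 35/2 := by
    have : x^2 = Real.exp (4*a) := by
      rw [hxdef, sq, ← Real.exp_add]; congr 1; ring
    rw [this]; linarith
  have hP := keyP x y hx hy hc
  have e0 : Real.exp (2*a) = x := hxdef.symm
  have e1 : Real.exp (2*t) = y := hydef.symm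
  have e2 : Real.exp (4*a+2*t) = x^2*y := by
    rw [show (4*a+2*t:ℝ) = 2*a+(2*a+(2*t)) by ring]
    simp only [Real.exp_add, hxdef, hydef]
    ring
  have e3 : Real.exp (8*a+2*t) = x^4*y := by
    rw [show (8*a+2*t:ℝ) = 2*a+(2*a+(2*a+(2*a+(2*t)))) by ring]
    simp only [Real.exp_add, hxdef, hydef]
    ring
  have e4 : Real.exp (6*a+4*t) = x^3*y^2 := by
    rw [show (6*a+4*t:ℝ) = 2*a+(2*a+(2*a+(2*t+(2*t)))) by ring]
    simp only [Real.exp_add, hxdef, hydef]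
    ring
  have e5 : Real.exp (10*a+4*t) = x^5*y^2 := by
    rw [show (10*a+4*t:ℝ) = 2*a+(2*a+(2*a+(2*a+(2*a+(2*t+(2*t)))))) by ring]
    simp only [Real.exp_add, hxdef, hydef]
    ring
  have e6 : Real.exp (8*a+6*t) = x^4*y^3 := by
    rw [show (8*a+6*t:ℝ) = 2*a+(2*a+(2*a+(2*a+(2*t+(2*t+(2*t)))))) by ring]
    simp only [Real.exp_add, hxdef, hydef]
    ring
  have e7 : Real.exp (12*a+6*t) = x^6*y^3 := by
    rw [show (12*a+6*t:ℝ) = 2*a+(2*a+(2*a+(2*a+(2*a+(2*a+(2*t+(2*t+(2*t)))))))) by ring]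
    simp only [Real.exp_add, hxdef, hydef]
    ring
  have hxne : x ≠ 0 := ne_of_gt hx0
  have hyne : y ≠ 0 := ne_of_gt hy0
  have hgoal : 76 * Real.sinh (2*a) - 22 * Real.sinh (2*t) + 29 * Real.sinh (4*a+2*t)
      + Real.sinh (8*a+2*t) - 26 * Real.sinh (6*a+4*t) - 6 * Real.sinh (10*a+4*t)
      - 25 * Real.sinh (8*a+6*t) + Real.sinh (12*a+6*t)
      = (x^12*y^6 - 25*x^10*y^6 - 6*x^11*y^5 - 26*x^9*y^5 + x^10*y^4 + 29*x^8*y^4 - 22*x^6*y^4 + 76*x^7*y^3 - 76*x^5*y^3 + 22*x^6*y^2 - 29*x^4*y^2 - x^2*y^2 + 26*x^3*y + 6*x*y + 25*x^2 - 1) / (2*x^6*y^3) := by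
    simp only [Real.sinh_eq, Real.exp_neg, e0, e1, e2, e3, e4, e5, e6, e7]
    field_simp
    ring
  rw [hgoal]
  exact div_neg_of_neg_of_pos hP (by positivity)
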